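/- In the growing-siphon interval c_S𝕀, the point 1 is future critical and the point 0 is past critical: every non-trivial controlled path starting at 1 is critical (not flexible), there exists one, and dually every non-trivial controlled path ending at 0 is critical, and there exists one; moreover no point of c_S𝕀 is (bilaterally) critical. -/
import Mathlib


open unitInterval Set

noncomputable def conc {X : Type*} (a b : I → X) : I → X := fun t =>
  if h : (t : ℝ) ≤ 1 / 2 then
    a ⟨2 * (t : ℝ), by constructor <;> nlinarith [t.2.1, t.2.2]⟩
  else
    b ⟨2 * (t : ℝ) - 1, by have h' := not_le.mp h; constructor <;> nlinarith [t.2.1, t.2.2]⟩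

structure IsCStructure {X : Type*} [TopologicalSpace X] (S : Set (I → X)) : Prop where
  cont : ∀ a ∈ S, Continuous a
  const_src : ∀ a ∈ S, (fun _ : I => a 0) ∈ S
  const_tgt : ∀ a ∈ S, (fun _ : I => a 1) ∈ S
  concat : ∀ a ∈ S, ∀ b ∈ S, a 1 = b 0 → conc a b ∈ S
  reparam : ∀ a ∈ S, ∀ ρ : I → I, Continuous ρ → Monotone ρ → Function.Surjective ρ → a ∘ ρ ∈ S

structure IsDStructure {X : Type*} [TopologicalSpace X] (S : Set (I → X)) : Prop where
  cont : ∀ a ∈ S, Continuous a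
  const : ∀ x : X, (fun _ : I => x) ∈ S
  concat : ∀ a ∈ S, ∀ b ∈ S, a 1 = b 0 → conc a b ∈ S
  reparam : ∀ a ∈ S, ∀ ρ : I → I, Continuous ρ → Monotone ρ → a ∘ ρ ∈ S

def IsFlexible {X : Type*} [TopologicalSpace X] (S : Set (I → X)) (a : I → X) : Prop :=
  a ∈ S ∧ ∀ (t₁ t₂ : ℝ) (h0 : 0 ≤ t₁) (h12 : t₁ < t₂) (h1 : t₂ ≤ 1),
    (fun t : I => a ⟨(t₂ - t₁) * (t : ℝ) + t₁, by
      constructor <;>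
        nlinarith [t.2.1, t.2.2, mul_nonneg (sub_nonneg.mpr h12.le) t.2.1,
          mul_le_of_le_one_right (sub_nonneg.mpr h12.le) t.2.2]⟩) ∈ S

/-- The growing-siphon interval `c_S𝕀`: the c-structure generated by all increasing
continuous maps together with the reversion `r(t) = 1 - t`. -/
def cSgen : Set (I → I) :=
  ⋂₀ {S : Set (I → I) | IsCStructure S ∧
    {a : I → I | Continuous a ∧ Monotone a} ⊆ S ∧ (unitInterval.symm : I → I) ∈ S}


lemma mono_mem {a : I → I} (hc : Continuous a) (hm : Monotone a) : a ∈ cSgen :=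
  fun _ hS => hS.2.1 ⟨hc, hm⟩

lemma symm_mem : (unitInterval.symm : I → I) ∈ cSgen := fun _ hS => hS.2.2

def Q (a : I → I) : Prop := (∃ s t : I, s ≤ t ∧ a t < a s) → ∃ u : I, a u = 1

lemma conc_continuous {a b : I → I} (ha : Continuous a) (hb : Continuous b)
    (hab : a 1 = b 0) : Continuous (conc a b) := by
  have h : conc a b = ((Path.mk ⟨a, ha⟩ rfl rfl : Path (a 0) (a 1)).trans
      (Path.mk ⟨b, hb⟩ hab.symm rfl : Path (a 1) (b 1)) : I → I) := by
    funext t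
    rw [Path.trans_apply]
    simp only [conc]
    split_ifs <;> rfl
  rw [h]; exact Path.continuous _

lemma conc_attains_one {a b : I → I} (hab : a 1 = b 0)
    (h : (∃ u : I, a u = 1) ∨ (∃ u : I, b u = 1)) : ∃ u : I, conc a b u = 1 := by
  have key : ∀ u : I, a u = 1 → ∃ w : I, conc a b w = 1 := by
    intro u hu
    refine ⟨⟨(u : ℝ) / 2, by constructor <;> nlinarith [u.2.1, u.2.2]⟩, ?_⟩
    have hle : ((u : ℝ) / 2) ≤ 1 / 2 := by nlinarith [u.2.2]
    simp only [conc, dif_pos hle]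
    convert hu using 2
    exact Subtype.ext (by ring)
  rcases h with ⟨u, hu⟩ | ⟨u, hu⟩
  · exact key u hu
  · by_cases h0 : (u : ℝ) = 0
    · have : b 0 = 1 := by rwa [show (0 : I) = u from Subtype.ext h0.symm]
      exact key 1 (hab.trans this)
    · have hupos : (0 : ℝ) < u := lt_of_le_of_ne u.2.1 (Ne.symm h0)
      refine ⟨⟨((u : ℝ) + 1) / 2, by constructor <;> nlinarith [u.2.1, u.2.2]⟩, ?_⟩
      have hgt : ¬ (((u : ℝ) + 1) / 2 ≤ 1 / 2) := by push_neg; nlinarith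
      simp only [conc, dif_neg hgt]
      convert hu using 2
      exact Subtype.ext (by ring)

lemma inv_cstructure : IsCStructure {a : I → I | Continuous a ∧ Q a} := by
  constructor
  · exact fun a ha => ha.1
  · exact fun a _ => ⟨continuous_const, fun ⟨s, t, _, hlt⟩ => absurd hlt (lt_irrefl _)⟩
  · exact fun a _ => ⟨continuous_const, fun ⟨s, t, _, hlt⟩ => absurd hlt (lt_irrefl _)⟩
  · rintro a ⟨hac, haQ⟩ b ⟨hbc, hbQ⟩ hab
    refine ⟨conc_continuous hac hbc hab, ?_⟩
    rintro ⟨s, t, hst, hlt⟩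
    have hstR : (s : ℝ) ≤ t := hst
    by_cases hs : (s : ℝ) ≤ 1 / 2 <;> by_cases ht : (t : ℝ) ≤ 1 / 2
    · simp only [conc, dif_pos hs, dif_pos ht] at hlt
      exact conc_attains_one hab (Or.inl (haQ ⟨_, _, Subtype.mk_le_mk.mpr (by linarith), hlt⟩))
    · simp only [conc, dif_pos hs, dif_neg ht] at hlt
      by_cases hd : a 1 < a ⟨2 * (s : ℝ), by constructor <;> nlinarith [s.2.1, s.2.2]⟩
      · exact conc_attains_one hab (Or.inl (haQ ⟨_, 1, le_one' , hd⟩))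
      · push_neg at hd
        exact conc_attains_one hab (Or.inr (hbQ
          ⟨0, ⟨2 * (t : ℝ) - 1, by constructor <;> nlinarith [t.2.1, t.2.2, not_le.mp ht]⟩,
            nonneg', lt_of_lt_of_le hlt (hab ▸ hd)⟩))
    · exact absurd hstR (by push_neg; linarith [not_le.mp hs])
    · simp only [conc, dif_neg hs, dif_neg ht] at hlt
      exact conc_attains_one hab (Or.inr (hbQ ⟨_, _, Subtype.mk_le_mk.mpr (by linarith), hlt⟩))
  · rintro a ⟨hac, haQ⟩ ρ hρc hρm hρs
    refine ⟨hac.comp hρc, ?_⟩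
    rintro ⟨s, t, hst, hlt⟩
    obtain ⟨u, hu⟩ := haQ ⟨ρ s, ρ t, hρm hst, hlt⟩
    obtain ⟨u', hu'⟩ := hρs u
    exact ⟨u', by simp [Function.comp, hu', hu]⟩

lemma mem_inv {a : I → I} (ha : a ∈ cSgen) : Continuous a ∧ Q a := by
  refine ha _ ⟨inv_cstructure, ?_, ?_⟩
  · rintro b ⟨hbc, hbm⟩
    exact ⟨hbc, fun ⟨s, t, hst, hlt⟩ => absurd hlt (not_lt.mpr (hbm hst))⟩
  · exact ⟨unitInterval.continuous_symm, fun _ => ⟨0, symm_zero⟩⟩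

lemma mono_flexible {a : I → I} (hc : Continuous a) (hm : Monotone a) :
    IsFlexible cSgen a := by
  refine ⟨mono_mem hc hm, fun t₁ t₂ h0 h12 h1 => ?_⟩
  refine mono_mem (hc.comp (Continuous.subtype_mk
    ((continuous_const.mul continuous_subtype_val).add continuous_const) _)) ?_
  intro x y hxy
  refine hm (Subtype.mk_le_mk.mpr ?_)
  have : (x : ℝ) ≤ y := hxy
  nlinarith

lemma flexible_mono {a : I → I} (hf : IsFlexible cSgen a) : Monotone a := by
  obtain ⟨haS, hres⟩ := hf
  have hcont : Continuous a := (mem_inv haS).1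
  intro s t hst
  by_contra hcon
  push_neg at hcon
  have hconR : (a t : ℝ) < a s := hcon
  have hstR : (s : ℝ) ≤ t := hst
  set d : ℝ := ((a s : ℝ) + (a t : ℝ)) / 2 with hd
  have hd1 : (a t : ℝ) < d := by rw [hd]; linarith
  have hd2 : d < (a s : ℝ) := by rw [hd]; linarith
  have hdlt1 : d < 1 := lt_of_lt_of_le hd2 (a s).2.2
  set K : Set I := {w : I | s ≤ w ∧ w ≤ t ∧ d ≤ (a w : ℝ)} with hK
  have hKclosed : IsClosed K := by
    have h1 : IsClosed {w : I | s ≤ w} := isClosed_Ici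
    have h2 : IsClosed {w : I | w ≤ t} := isClosed_Iic
    have h3 : IsClosed {w : I | d ≤ (a w : ℝ)} :=
      isClosed_le continuous_const (continuous_subtype_val.comp hcont)
    exact h1.inter (h2.inter h3)
  obtain ⟨p, hpK, hpmax⟩ :=
    hKclosed.isCompact.exists_isGreatest ⟨s, le_refl _, hst, hd2.le⟩
  obtain ⟨hsp, hpt, hdp⟩ := hpK
  have hplt : (p : ℝ) < t := by
    refine lt_of_le_of_ne (Subtype.coe_le_coe.mpr hpt) fun h => ?_
    rw [show p = t from Subtype.ext h] at hdp
    linarith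
  have hbound : ∀ w : I, (p : ℝ) < w → (w : ℝ) ≤ t → (a w : ℝ) < d := by
    intro w hpw hwt
    by_contra hge
    push_neg at hge
    have : w ∈ K := ⟨le_trans hsp (le_of_lt hpw), hwt, hge⟩
    exact absurd (hpmax this : (w : ℝ) ≤ p) (not_le.mpr hpw)
  -- find p' slightly to the right of p with a p' > a t
  have hU : IsOpen {w : I | (a t : ℝ) < (a w : ℝ)} :=
    isOpen_Ioi.preimage (continuous_subtype_val.comp hcont)
  have hpU : p ∈ {w : I | (a t : ℝ) < (a w : ℝ)} := lt_of_lt_of_le hd1 hdp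
  obtain ⟨δ, hδpos, hball⟩ := Metric.isOpen_iff.mp hU p hpU
  set ε : ℝ := min (δ / 2) (((t : ℝ) - p) / 2) with hε
  have hεpos : 0 < ε := lt_min (by linarith) (by linarith)
  have hεt : (p : ℝ) + ε < t := by
    have := min_le_right (δ / 2) (((t : ℝ) - p) / 2)
    linarith [this.trans_lt (show ((t : ℝ) - p) / 2 < (t : ℝ) - p by linarith)]
  set p' : I := ⟨(p : ℝ) + ε, by constructor <;> nlinarith [p.2.1, t.2.2]⟩ with hp'
  have hp'U : (a t : ℝ) < a p' := by
    refine hball (Metric.mem_ball.mpr ?_)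
    rw [Subtype.dist_eq]
    simp only [hp']
    rw [Real.dist_eq]
    rw [show (p : ℝ) + ε - p = ε by ring, abs_of_pos hεpos]
    exact lt_of_le_of_lt (min_le_left _ _) (by linarith)
  have h0p' : (0 : ℝ) ≤ (p' : ℝ) := p'.2.1
  have hp't : (p' : ℝ) < t := hεt
  have ht1 : (t : ℝ) ≤ 1 := t.2.2
  have hgmem : (fun u : I => a ⟨((t : ℝ) - p') * (u : ℝ) + p', by
      constructor <;> nlinarith [u.2.1, u.2.2, h0p', hp't, ht1]⟩) ∈ cSgen :=
    hres (p' : ℝ) (t : ℝ) h0p' hp't ht1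
  set g : I → I := fun u : I => a ⟨((t : ℝ) - p') * (u : ℝ) + p', by
      constructor <;> nlinarith [u.2.1, u.2.2, h0p', hp't, ht1]⟩ with hg
  have hQg : Q g := (mem_inv hgmem).2
  have h1 : g 1 = a t := congrArg a (Subtype.ext (by simp))
  have h0 : g 0 = a p' := congrArg a (Subtype.ext (by simp))
  obtain ⟨u, hu⟩ := hQg ⟨0, 1, zero_le_one, by
    rw [h1, h0]; exact Subtype.coe_lt_coe.mp hp'U⟩
  have hwt : ((t : ℝ) - p') * (u : ℝ) + p' ≤ t := by nlinarith [u.2.1, u.2.2]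
  have hpw : (p : ℝ) < ((t : ℝ) - p') * (u : ℝ) + p' := by
    have : (p : ℝ) < p' := by simp only [hp']; linarith
    nlinarith [u.2.1]
  have hw := hbound ⟨((t : ℝ) - p') * (u : ℝ) + p', by
    constructor <;> nlinarith [u.2.1, u.2.2, h0p']⟩ hpw hwt
  have hgd : (g u : ℝ) < d := hw
  rw [hu] at hgd
  simp only [Icc.coe_one] at hgd
  linarith


/-- In the growing-siphon interval, `1` is future critical, `0` is past critical, and no point
is (bilaterally) critical. -/
theorem cSgen_critical_points :
    ((∀ a ∈ cSgen, a 0 = 1 → (∃ s t : I, a s ≠ a t) → ¬ IsFlexible cSgen a) ∧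
      ∃ a ∈ cSgen, a 0 = 1 ∧ ∃ s t : I, a s ≠ a t) ∧
    ((∀ a ∈ cSgen, a 1 = 0 → (∃ s t : I, a s ≠ a t) → ¬ IsFlexible cSgen a) ∧
      ∃ a ∈ cSgen, a 1 = 0 ∧ ∃ s t : I, a s ≠ a t) ∧
    ∀ x : I, ¬ ((∀ a ∈ cSgen, (∃ t : I, a t = x) → (∃ s t : I, a s ≠ a t) →
        ¬ IsFlexible cSgen a) ∧
      ∃ a ∈ cSgen, (∃ t : I, a t = x) ∧ ∃ s t : I, a s ≠ a t) := by
  have hne10 : (σ 0 : I) ≠ σ 1 := by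
    rw [symm_zero, symm_one]
    intro h
    exact one_ne_zero (congrArg Subtype.val h : ((1 : I) : ℝ) = 0)
  refine ⟨⟨?_, σ, symm_mem, symm_zero, 0, 1, hne10⟩,
    ⟨?_, σ, symm_mem, symm_one, 0, 1, hne10⟩, ?_⟩
  · rintro a ha h0 ⟨s, t, hne⟩ hf
    have hm := flexible_mono hf
    have hall : ∀ u : I, a u = 1 := fun u =>
      le_antisymm le_one' (h0 ▸ hm (nonneg' : (0 : I) ≤ u))
    exact hne ((hall s).trans (hall t).symm)
  · rintro a ha h1 ⟨s, t, hne⟩ hf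
    have hm := flexible_mono hf
    have hall : ∀ u : I, a u = 0 := fun u =>
      le_antisymm (h1 ▸ hm (le_one' : u ≤ 1)) nonneg'
    exact hne ((hall s).trans (hall t).symm)
  · rintro x ⟨H1, -⟩
    refine H1 (fun u => u) (mono_mem continuous_id monotone_id) ⟨x, rfl⟩
      ⟨0, 1, fun h => one_ne_zero (congrArg Subtype.val h.symm : ((1 : I) : ℝ) = 0)⟩
      (mono_flexible continuous_id monotone_id)
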